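/- arXiv:2205.05931 — 3 statements merged into one kernel-verified Lean document; each statement's English description precedes it below -/
import Mathlib

section
/- Let Δ(x) = θ(x) − x and suppose |Δ(x)| ≤ C√x (log x)² for x > X₀. Then for all sufficiently large x, log log θ(x) − log log x = Δ(x)/(x log x) + O((log x)³/x), i.e. |log log θ(x) − log log x − Δ(x)/(x log x)| ≤ C'·(log x)³/x for some constant C'. -/
open Filter Real

/-- The first Chebyshev function θ(y) = ∑_{p ≤ y} log p. -/
noncomputable def chebTheta (y : ℝ) : ℝ :=
  ∑ p ∈ (Finset.range (⌊y⌋₊ + 1)).filter Nat.Prime, Real.log p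

lemma logTaylor1 (δ : ℝ) (hδ : |δ| ≤ 1/2) : |Real.log (1+δ) - δ| ≤ 2*δ^2 := by
  have h1 : |(-δ)| < 1 := by rw [abs_neg]; linarith
  have h2 := Real.abs_log_sub_add_sum_range_le h1 1
  simp only [Finset.sum_range_one, pow_one, Nat.cast_zero, zero_add, div_one, abs_neg] at h2
  have h3 : (1 : ℝ) - -δ = 1 + δ := by ring
  rw [h3] at h2
  have h4 : |Real.log (1+δ) - δ| = |(-δ) + Real.log (1+δ)| := by
    rw [show (-δ) + Real.log (1+δ) = Real.log (1+δ) - δ by ring]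
  rw [h4]
  refine h2.trans ?_
  have hd2 : (0:ℝ) ≤ δ^2 := sq_nonneg δ
  have h5 : (1:ℝ)/2 ≤ 1 - |δ| := by linarith
  have h6 : |δ|^(1+1) = δ^2 := by rw [pow_succ, pow_one, ← sq, sq_abs]
  rw [h6]
  rw [div_le_iff₀ (by linarith)]
  nlinarith [abs_nonneg δ]

set_option maxHeartbeats 1600000 in
/-- If Δ(x) = θ(x) − x satisfies |Δ(x)| ≤ C √x (log x)² for x > X₀, then for all
sufficiently large x, |log log θ(x) − log log x − Δ(x)/(x log x)| ≤ C'(log x)³/x. -/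
theorem stmt_6 (C X₀ : ℝ) (hC : 0 < C)
    (h : ∀ x : ℝ, X₀ < x → |chebTheta x - x| ≤ C * Real.sqrt x * (Real.log x) ^ 2) :
    ∃ C' X₁ : ℝ, 0 < C' ∧ ∀ x : ℝ, X₁ < x →
      |Real.log (Real.log (chebTheta x)) - Real.log (Real.log x)
          - (chebTheta x - x) / (x * Real.log x)|
        ≤ C' * (Real.log x) ^ 3 / x := by
  -- eventually C * (log x)^2 / sqrt x ≤ 1/4
  have hlo : (fun x : ℝ => Real.log x ^ (2:ℝ)) =o[atTop] fun x : ℝ => x ^ ((1:ℝ)/2) :=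
    isLittleO_log_rpow_rpow_atTop 2 (by norm_num)
  have hev0 : ∀ᶠ x : ℝ in atTop, ‖Real.log x ^ (2:ℝ)‖ ≤ (1/(4*C)) * ‖x ^ ((1:ℝ)/2)‖ :=
    hlo.bound (by positivity)
  have hev : ∀ᶠ x : ℝ in atTop,
      (X₀ < x ∧ 3 < x) ∧ C * (Real.log x)^2 / Real.sqrt x ≤ 1/4 := by
    filter_upwards [hev0, eventually_gt_atTop X₀, eventually_gt_atTop 3] with x h0 h1 h2
    have hx0 : (0:ℝ) < x := by linarith
    have hL1 : (1:ℝ) ≤ Real.log x := by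
      have : Real.log (Real.exp 1) ≤ Real.log x :=
        Real.log_le_log (Real.exp_pos 1) (by linarith [Real.exp_one_lt_d9])
      simpa using this
    have hsq : (0:ℝ) < Real.sqrt x := Real.sqrt_pos.mpr hx0
    refine ⟨⟨h1, h2⟩, ?_⟩
    rw [Real.norm_eq_abs, Real.norm_eq_abs, abs_of_nonneg (by positivity),
      abs_of_nonneg (by positivity)] at h0
    have hr1 : Real.log x ^ (2:ℝ) = Real.log x ^ 2 := by
      rw [show (2:ℝ) = ((2:ℕ):ℝ) by norm_num, Real.rpow_natCast]
    have hr2 : x ^ ((1:ℝ)/2) = Real.sqrt x := by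
      rw [← Real.sqrt_eq_rpow]
    rw [hr1, hr2] at h0
    rw [div_le_iff₀ hsq]
    calc C * Real.log x ^ 2 ≤ C * ((1/(4*C)) * Real.sqrt x) := by
          exact mul_le_mul_of_nonneg_left h0 hC.le
      _ = 1/4 * Real.sqrt x := by field_simp
  obtain ⟨X₁, hX₁⟩ := eventually_atTop.mp hev
  refine ⟨10 * C^2 + 1, X₁, by positivity, ?_⟩
  intro x hx
  obtain ⟨⟨hxX₀, hx3⟩, hA⟩ := hX₁ x hx.le
  have hx0 : (0:ℝ) < x := by linarith
  have hsq : (0:ℝ) < Real.sqrt x := Real.sqrt_pos.mpr hx0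
  set L := Real.log x with hLdef
  have hL1 : (1:ℝ) ≤ L := by
    have : Real.log (Real.exp 1) ≤ Real.log x :=
      Real.log_le_log (Real.exp_pos 1) (by linarith [Real.exp_one_lt_d9])
    simpa using this
  have hL0 : (0:ℝ) < L := by linarith
  set θ := chebTheta x with hθdef
  set δ := (θ - x) / x with hδdef
  have hΔ : |θ - x| ≤ C * Real.sqrt x * L ^ 2 := h x hxX₀
  have hδle : |δ| ≤ C * L^2 / Real.sqrt x := by
    rw [hδdef, abs_div, abs_of_pos hx0, div_le_div_iff₀ hx0 hsq]
    calc |θ - x| * Real.sqrt x ≤ (C * Real.sqrt x * L ^ 2) * Real.sqrt x :=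
          mul_le_mul_of_nonneg_right hΔ hsq.le
      _ = C * L^2 * (Real.sqrt x * Real.sqrt x) := by ring
      _ = C * L^2 * x := by rw [Real.mul_self_sqrt hx0.le]
  have hδ14 : |δ| ≤ 1/4 := hδle.trans hA
  have hδ12 : |δ| ≤ 1/2 := by linarith
  have hδpos : (0:ℝ) < 1 + δ := by
    have := abs_le.mp hδ14; linarith [this.1]
  have hθeq : θ = x * (1 + δ) := by
    rw [hδdef, mul_add, mul_div_assoc', mul_comm x (θ - x), mul_div_assoc, div_self hx0.ne']; ring
  have hE1 : |Real.log (1+δ) - δ| ≤ 2*δ^2 := logTaylor1 δ hδ12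
  set u := Real.log (1+δ) / L with hudef
  have huδ : |u| ≤ 2 * |δ| / L := by
    rw [hudef, abs_div, abs_of_pos hL0]
    gcongr
    calc |Real.log (1+δ)| = |δ + (Real.log (1+δ) - δ)| := by ring_nf
      _ ≤ |δ| + |Real.log (1+δ) - δ| := abs_add_le _ _
      _ ≤ |δ| + 2*δ^2 := by linarith
      _ ≤ 2 * |δ| := by nlinarith [sq_abs δ, abs_nonneg δ]
  have hu12 : |u| ≤ 1/2 := by
    refine huδ.trans ?_
    rw [div_le_iff₀ hL0]
    nlinarith [abs_nonneg δ]
  have hupos : (0:ℝ) < 1 + u := by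
    have := abs_le.mp hu12; linarith [this.1]
  have hlogθ : Real.log θ = L * (1 + u) := by
    rw [hθeq, Real.log_mul hx0.ne' hδpos.ne', hudef]
    field_simp
    rfl
  have hkey : Real.log (Real.log θ) - Real.log (Real.log x) = Real.log (1+u) := by
    rw [hlogθ, Real.log_mul hL0.ne' hupos.ne', ← hLdef]
    ring
  have hδL : (θ - x) / (x * L) = δ / L := by
    rw [hδdef, div_div]
  rw [hkey, hδL]
  have hE2 : |Real.log (1+u) - u| ≤ 2*u^2 := logTaylor1 u hu12
  have hsplit : Real.log (1+u) - δ/L = (Real.log (1+u) - u) + (Real.log (1+δ) - δ)/L := by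
    rw [hudef]; field_simp; ring
  rw [hsplit]
  have hδ2 : δ^2 ≤ C^2*L^4/x := by
    have h1 : δ^2 ≤ (C*L^2/Real.sqrt x)^2 := by
      rw [← sq_abs δ]; exact pow_le_pow_left₀ (abs_nonneg δ) hδle 2
    refine h1.trans_eq ?_
    rw [div_pow, Real.sq_sqrt hx0.le]; ring
  have hub : |u| ≤ 2*C*L/Real.sqrt x := by
    refine huδ.trans ?_
    have h1 : 2*|δ|/L ≤ 2*(C*L^2/Real.sqrt x)/L := by gcongr
    refine h1.trans_eq ?_
    field_simp
  have t1 : u^2 ≤ 4*(C^2*L^2/x) := by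
    have h1 : u^2 ≤ (2*C*L/Real.sqrt x)^2 := by
      rw [← sq_abs u]; exact pow_le_pow_left₀ (abs_nonneg u) hub 2
    refine h1.trans_eq ?_
    rw [div_pow, Real.sq_sqrt hx0.le]; ring
  have t2 : |Real.log (1+δ) - δ|/L ≤ 2*(C^2*L^3/x) := by
    rw [div_le_iff₀ hL0]
    calc |Real.log (1+δ) - δ| ≤ 2*δ^2 := hE1
      _ ≤ 2*(C^2*L^4/x) := by linarith
      _ = 2*(C^2*L^3/x)*L := by field_simp
  have t3 : 4*(C^2*L^2/x) ≤ 4*(C^2*L^3/x) := by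
    have h1 : C^2*L^2 ≤ C^2*L^3 := by
      nlinarith [mul_nonneg (mul_nonneg (sq_nonneg C) (sq_nonneg L)) (sub_nonneg.mpr hL1)]
    have h2 : C^2*L^2/x ≤ C^2*L^3/x := by gcongr
    linarith
  calc |(Real.log (1+u) - u) + (Real.log (1+δ) - δ)/L|
      ≤ |Real.log (1+u) - u| + |(Real.log (1+δ) - δ)/L| := abs_add_le _ _
    _ = |Real.log (1+u) - u| + |Real.log (1+δ) - δ|/L := by
        rw [abs_div, abs_of_pos hL0]
    _ ≤ 2*u^2 + 2*(C^2*L^3/x) := by linarith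
    _ ≤ 2*(4*(C^2*L^3/x)) + 2*(C^2*L^3/x) := by linarith
    _ = (10*C^2)*L^3/x := by ring
    _ ≤ (10*C^2+1)*L^3/x := by
        gcongr ?_ / x
        nlinarith
end

section
/- Suppose Φ(t) satisfies −(2/3 + 0.1)t^{3/2} ≤ Φ(t) ≤ (−2/3 + 0.1)t^{3/2} for all t > X₀. Let E(x) = ∫_x^∞ Φ(t)/(t³ log t)·(2 + 3/(log t) + 2/(log t)²) dt. Then −92/30 ≤ liminf_{x→∞} E(x)·√x·log x and limsup_{x→∞} E(x)·√x·log x ≤ −68/30. -/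
open Filter Real MeasureTheory

open Set

private lemma hD1 {t : ℝ} (ht : 1 < t) :
    HasDerivAt (fun s : ℝ => -4 * s ^ (-(1:ℝ)/2) / Real.log s)
      (t ^ (-(3:ℝ)/2) * (2 / Real.log t + 4 / (Real.log t) ^ 2)) t := by
  have ht0 : 0 < t := by linarith
  have hL : 0 < Real.log t := Real.log_pos ht
  have h1 : HasDerivAt (fun s : ℝ => -4 * s ^ (-(1:ℝ)/2))
      (-4 * ((-(1:ℝ)/2) * t ^ ((-(1:ℝ)/2) - 1))) t :=
    (Real.hasDerivAt_rpow_const (Or.inl ht0.ne')).const_mul (-4)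
  have hlog : HasDerivAt Real.log t⁻¹ t := Real.hasDerivAt_log ht0.ne'
  have h2 := h1.div hlog hL.ne'
  refine h2.congr_deriv ?_
  have hu : t ^ (-(1:ℝ)/2) = t * t ^ (-(3:ℝ)/2) := by
    rw [show (-(1:ℝ)/2) = 1 + (-(3:ℝ)/2) by norm_num, Real.rpow_add ht0, Real.rpow_one]
  rw [show (-(1:ℝ)/2 - 1) = -(3:ℝ)/2 by norm_num, hu]
  field_simp
  ring

private lemma hD2 {t : ℝ} (ht : 1 < t) :
    HasDerivAt (fun s : ℝ => s ^ (-(1:ℝ)/2) * (-4 / Real.log s + 2 / (Real.log s) ^ 2))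
      (t ^ (-(3:ℝ)/2) * (2 / Real.log t + 3 / (Real.log t) ^ 2 - 4 / (Real.log t) ^ 3)) t := by
  have ht0 : 0 < t := by linarith
  have hL : 0 < Real.log t := Real.log_pos ht
  have h1 : HasDerivAt (fun s : ℝ => s ^ (-(1:ℝ)/2)) ((-(1:ℝ)/2) * t ^ ((-(1:ℝ)/2) - 1)) t :=
    Real.hasDerivAt_rpow_const (Or.inl ht0.ne')
  have hlog : HasDerivAt Real.log t⁻¹ t := Real.hasDerivAt_log ht0.ne'
  have h2 := h1.mul (((hasDerivAt_const t (-4:ℝ)).div hlog hL.ne').add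
    ((hasDerivAt_const t (2:ℝ)).div (hlog.pow 2) (pow_ne_zero 2 hL.ne')))
  refine h2.congr_deriv ?_
  have hu : t ^ (-(1:ℝ)/2) = t * t ^ (-(3:ℝ)/2) := by
    rw [show (-(1:ℝ)/2) = 1 + (-(3:ℝ)/2) by norm_num, Real.rpow_add ht0, Real.rpow_one]
  rw [show (-(1:ℝ)/2 - 1) = -(3:ℝ)/2 by norm_num, hu]
  simp only [Pi.add_apply, Pi.div_apply, Pi.pow_apply]
  push_cast
  field_simp
  ring

private lemma hT1 : Tendsto (fun s : ℝ => -4 * s ^ (-(1:ℝ)/2) / Real.log s) atTop (nhds 0) := by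
  have h1 : Tendsto (fun s : ℝ => s ^ (-(1:ℝ)/2)) atTop (nhds 0) := by
    have := tendsto_rpow_neg_atTop (y := (1:ℝ)/2) (by norm_num)
    simpa [neg_div] using this
  have h2 : Tendsto (fun s : ℝ => (Real.log s)⁻¹) atTop (nhds 0) :=
    Real.tendsto_log_atTop.inv_tendsto_atTop
  have h3 := (h1.const_mul (-4:ℝ)).mul h2
  simpa [div_eq_mul_inv] using h3

private lemma hT2 : Tendsto (fun s : ℝ => s ^ (-(1:ℝ)/2) * (-4 / Real.log s + 2 / (Real.log s) ^ 2))
    atTop (nhds 0) := by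
  have h1 : Tendsto (fun s : ℝ => s ^ (-(1:ℝ)/2)) atTop (nhds 0) := by
    have := tendsto_rpow_neg_atTop (y := (1:ℝ)/2) (by norm_num)
    simpa [neg_div] using this
  have h2 : Tendsto (fun s : ℝ => (Real.log s)⁻¹) atTop (nhds 0) :=
    Real.tendsto_log_atTop.inv_tendsto_atTop
  have h3 := (h2.const_mul (-4:ℝ)).add ((h2.pow 2).const_mul (2:ℝ))
  have heq : (fun s : ℝ => s ^ (-(1:ℝ)/2) * (-4 / Real.log s + 2 / (Real.log s) ^ 2))
      = fun s : ℝ => s ^ (-(1:ℝ)/2) * (-4 * (Real.log s)⁻¹ + 2 * ((Real.log s)⁻¹) ^ 2) := by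
    funext s; rw [inv_pow]; ring
  rw [heq]
  simpa using h1.mul h3

private lemma integrable_of_bound {x : ℝ} (hx : 0 < x) {f : ℝ → ℝ}
    (hf : AEStronglyMeasurable f (volume.restrict (Ioi x))) (C : ℝ)
    (hb : ∀ t ∈ Ioi x, |f t| ≤ C * t ^ (-(3:ℝ)/2)) : IntegrableOn f (Ioi x) := by
  have hbase : IntegrableOn (fun t : ℝ => t ^ (-(3:ℝ)/2)) (Ioi x) := by
    have := integrableOn_Ioi_rpow_of_lt (a := -(3:ℝ)/2) (by norm_num) hx
    exact this
  refine Integrable.mono' (hbase.const_mul C) hf ?_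
  refine (ae_restrict_iff' measurableSet_Ioi).2 (ae_of_all _ ?_)
  intro t ht
  simpa [Real.norm_eq_abs] using hb t ht

private lemma gbounds {t : ℝ} (ht : Real.exp 2 ≤ t) :
    (0:ℝ) ≤ 2 / Real.log t + 4 / (Real.log t) ^ 2
    ∧ 2 / Real.log t + 4 / (Real.log t) ^ 2 ≤ 2
    ∧ (0:ℝ) ≤ 2 / Real.log t + 3 / (Real.log t) ^ 2 - 4 / (Real.log t) ^ 3
    ∧ 2 / Real.log t + 3 / (Real.log t) ^ 2 - 4 / (Real.log t) ^ 3 ≤ 2 := by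
  have ht0 : 0 < t := lt_of_lt_of_le (Real.exp_pos 2) ht
  have hL : 2 ≤ Real.log t := (Real.le_log_iff_exp_le ht0).2 ht
  have hL0 : 0 < Real.log t := by linarith
  set L := Real.log t
  have h1 : 2 / L ≤ 1 := by rw [div_le_one hL0]; linarith
  have h2 : 4 / L^2 ≤ 1 := by rw [div_le_one (by positivity)]; nlinarith
  have h3 : 3 / L^2 ≤ 1 := by rw [div_le_one (by positivity)]; nlinarith
  have h4 : 4 / L^3 ≤ 2 / L := by
    rw [div_le_div_iff₀ (by positivity) hL0]; nlinarith
  have h5 : (0:ℝ) ≤ 4 / L^3 := by positivity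
  have h6 : (0:ℝ) ≤ 2 / L := by positivity
  have h7 : (0:ℝ) ≤ 3 / L^2 := by positivity
  have h8 : (0:ℝ) ≤ 4 / L^2 := by positivity
  exact ⟨by linarith, by linarith, by linarith, by linarith⟩

private lemma ptwise {Φ : ℝ → ℝ} {X₀ t : ℝ}
    (hlb : ∀ t : ℝ, X₀ < t → -(2 / 3 + 0.1) * t ^ ((3 : ℝ) / 2) ≤ Φ t)
    (hub : ∀ t : ℝ, X₀ < t → Φ t ≤ (-2 / 3 + 0.1) * t ^ ((3 : ℝ) / 2))
    (htX : X₀ < t) (ht : Real.exp 2 ≤ t) :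
    ((-23/30 : ℝ) * (t ^ (-(3:ℝ)/2) * (2 / Real.log t + 4 / (Real.log t) ^ 2))
      ≤ Φ t / (t ^ 3 * Real.log t) * (2 + 3 / Real.log t + 2 / (Real.log t) ^ 2)) ∧
    (Φ t / (t ^ 3 * Real.log t) * (2 + 3 / Real.log t + 2 / (Real.log t) ^ 2)
      ≤ (-17/30 : ℝ) * (t ^ (-(3:ℝ)/2) * (2 / Real.log t + 3 / (Real.log t) ^ 2
        - 4 / (Real.log t) ^ 3))) := by
  have ht0 : 0 < t := lt_of_lt_of_le (Real.exp_pos 2) ht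
  have hL : 2 ≤ Real.log t := (Real.le_log_iff_exp_le ht0).2 ht
  have hL0 : 0 < Real.log t := by linarith
  set L := Real.log t with hLdef
  set P := t ^ ((3:ℝ)/2) with hPdef
  have hP : 0 < P := Real.rpow_pos_of_pos ht0 _
  have hP2 : t ^ 3 = P ^ 2 := by
    rw [hPdef, ← Real.rpow_natCast (t ^ ((3:ℝ)/2)) 2, ← Real.rpow_mul ht0.le,
      ← Real.rpow_natCast t 3]
    norm_num
  have hPinv : t ^ (-(3:ℝ)/2) = P⁻¹ := by
    rw [show (-(3:ℝ)/2) = -((3:ℝ)/2) by ring, Real.rpow_neg ht0.le]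
  have hΦl : -(23/30) * P ≤ Φ t := by
    have h := hlb t htX; norm_num at h ⊢; linarith
  have hΦu : Φ t ≤ -(17/30) * P := by
    have h := hub t htX; norm_num at h ⊢; linarith
  rw [hP2, hPinv]
  constructor
  · have e1 : (-23/30 : ℝ) * (P⁻¹ * (2/L + 4/L^2)) = (-(23/30) * (2*L + 4)) / (P * L^2) := by
      field_simp
    have e2 : Φ t / (P^2 * L) * (2 + 3/L + 2/L^2) = (Φ t * (2*L^2 + 3*L + 2)) / (P^2 * L^3) := by
      field_simp
    rw [e1, e2, div_le_div_iff₀ (by positivity) (by positivity)]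
    have h1 : -(23/30) * P * (2*L^2+3*L+2) ≤ Φ t * (2*L^2+3*L+2) :=
      mul_le_mul_of_nonneg_right hΦl (by nlinarith)
    nlinarith [mul_le_mul_of_nonneg_right h1 (mul_pos hP (mul_pos hL0 hL0)).le,
      mul_nonneg (mul_nonneg (mul_pos hP hP).le (mul_pos hL0 hL0).le)
        (show (0:ℝ) ≤ L - 2 by linarith)]
  · have e2 : Φ t / (P^2 * L) * (2 + 3/L + 2/L^2) = (Φ t * (2*L^2 + 3*L + 2)) / (P^2 * L^3) := by
      field_simp
    have e3 : (-17/30 : ℝ) * (P⁻¹ * (2/L + 3/L^2 - 4/L^3))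
        = (-(17/30) * (2*L^2 + 3*L - 4)) / (P * L^3) := by
      field_simp
    rw [e2, e3, div_le_div_iff₀ (by positivity) (by positivity)]
    have h1 : Φ t * (2*L^2+3*L+2) ≤ -(17/30) * P * (2*L^2+3*L+2) :=
      mul_le_mul_of_nonneg_right hΦu (by nlinarith)
    nlinarith [mul_le_mul_of_nonneg_right h1 (mul_pos hP (pow_pos hL0 3)).le,
      mul_nonneg (mul_pos hP hP).le (pow_pos hL0 3).le]

private lemma key (Φ : ℝ → ℝ) (hmeas : Measurable Φ) (X₀ : ℝ)
    (hlb : ∀ t : ℝ, X₀ < t → -(2 / 3 + 0.1) * t ^ ((3 : ℝ) / 2) ≤ Φ t)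
    (hub : ∀ t : ℝ, X₀ < t → Φ t ≤ (-2 / 3 + 0.1) * t ^ ((3 : ℝ) / 2))
    {x : ℝ} (hxX : X₀ ≤ x) (hxe : Real.exp 2 ≤ x) :
    -92/30 ≤ (∫ t in Set.Ici x, Φ t / (t ^ 3 * Real.log t)
        * (2 + 3 / Real.log t + 2 / (Real.log t) ^ 2)) * Real.sqrt x * Real.log x ∧
    (∫ t in Set.Ici x, Φ t / (t ^ 3 * Real.log t)
        * (2 + 3 / Real.log t + 2 / (Real.log t) ^ 2)) * Real.sqrt x * Real.log x
      ≤ -68/30 + (17/15) / Real.log x := by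
  have h3e : (3:ℝ) ≤ Real.exp 2 := by have := Real.add_one_le_exp (2:ℝ); linarith
  have hx0 : 0 < x := lt_of_lt_of_le (Real.exp_pos 2) hxe
  have hx1 : 1 < x := by linarith
  have hLx : 2 ≤ Real.log x := (Real.le_log_iff_exp_le hx0).2 hxe
  have hLx0 : 0 < Real.log x := by linarith
  set f : ℝ → ℝ := fun t => Φ t / (t ^ 3 * Real.log t)
      * (2 + 3 / Real.log t + 2 / (Real.log t) ^ 2) with hfdef
  have hfm : Measurable f :=
    (hmeas.div ((measurable_id.pow_const 3).mul Real.measurable_log)).mul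
      (((measurable_const.div Real.measurable_log).const_add (2:ℝ)).add
        (measurable_const.div (Real.measurable_log.pow_const 2)))
  have hpt : ∀ t ∈ Ioi x,
      ((-23/30 : ℝ) * (t ^ (-(3:ℝ)/2) * (2 / Real.log t + 4 / (Real.log t) ^ 2)) ≤ f t) ∧
      (f t ≤ (-17/30 : ℝ) * (t ^ (-(3:ℝ)/2) * (2 / Real.log t + 3 / (Real.log t) ^ 2
        - 4 / (Real.log t) ^ 3))) :=
    fun t ht => ptwise hlb hub (lt_of_le_of_lt hxX ht) (le_trans hxe ht.le)
  have hg1i : IntegrableOn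
      (fun t : ℝ => t ^ (-(3:ℝ)/2) * (2 / Real.log t + 4 / (Real.log t) ^ 2)) (Ioi x) := by
    have hbase : IntegrableOn (fun t : ℝ => t ^ (-(3:ℝ)/2)) (Ioi x) :=
      integrableOn_Ioi_rpow_of_lt (a := -(3:ℝ)/2) (by norm_num) hx0
    refine integrable_of_bound hx0 (hbase.aestronglyMeasurable.mul
      (Measurable.aestronglyMeasurable ((measurable_const.div Real.measurable_log).add
        (measurable_const.div (Real.measurable_log.pow_const 2))))) 2 ?_
    intro t ht
    obtain ⟨q1, q2, _, _⟩ := gbounds (le_trans hxe ht.le)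
    have ht0 : (0:ℝ) < t := lt_trans hx0 ht
    have htp : (0:ℝ) ≤ t ^ (-(3:ℝ)/2) := Real.rpow_nonneg ht0.le _
    rw [abs_of_nonneg (mul_nonneg htp q1), mul_comm (2:ℝ)]
    exact mul_le_mul_of_nonneg_left q2 htp
  have hg2i : IntegrableOn
      (fun t : ℝ => t ^ (-(3:ℝ)/2) * (2 / Real.log t + 3 / (Real.log t) ^ 2
        - 4 / (Real.log t) ^ 3)) (Ioi x) := by
    have hbase : IntegrableOn (fun t : ℝ => t ^ (-(3:ℝ)/2)) (Ioi x) :=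
      integrableOn_Ioi_rpow_of_lt (a := -(3:ℝ)/2) (by norm_num) hx0
    refine integrable_of_bound hx0 (hbase.aestronglyMeasurable.mul
      (Measurable.aestronglyMeasurable (((measurable_const.div Real.measurable_log).add
        (measurable_const.div (Real.measurable_log.pow_const 2))).sub
        (measurable_const.div (Real.measurable_log.pow_const 3))))) 2 ?_
    intro t ht
    obtain ⟨_, _, q3, q4⟩ := gbounds (le_trans hxe ht.le)
    have ht0 : (0:ℝ) < t := lt_trans hx0 ht
    have htp : (0:ℝ) ≤ t ^ (-(3:ℝ)/2) := Real.rpow_nonneg ht0.le _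
    rw [abs_of_nonneg (mul_nonneg htp q3), mul_comm (2:ℝ)]
    exact mul_le_mul_of_nonneg_left q4 htp
  have hfi : IntegrableOn f (Ioi x) := by
    refine integrable_of_bound hx0 hfm.aestronglyMeasurable 2 ?_
    intro t ht
    obtain ⟨hl, hu⟩ := hpt t ht
    obtain ⟨q1, q2, q3, _⟩ := gbounds (le_trans hxe ht.le)
    have ht0 : (0:ℝ) < t := lt_trans hx0 ht
    have htp : (0:ℝ) ≤ t ^ (-(3:ℝ)/2) := Real.rpow_nonneg ht0.le _
    rw [abs_le]
    constructor
    · have := mul_le_mul_of_nonneg_left q2 htp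
      linarith
    · have := mul_nonneg htp q3
      nlinarith
  have hi1 : ∫ t in Ioi x, t ^ (-(3:ℝ)/2) * (2 / Real.log t + 4 / (Real.log t) ^ 2)
      = 0 - (-4 * x ^ (-(1:ℝ)/2) / Real.log x) :=
    integral_Ioi_of_hasDerivAt_of_tendsto' (fun t htt => hD1 (lt_of_lt_of_le hx1 htt)) hg1i hT1
  have hi2 : ∫ t in Ioi x, t ^ (-(3:ℝ)/2) * (2 / Real.log t + 3 / (Real.log t) ^ 2
        - 4 / (Real.log t) ^ 3)
      = 0 - (x ^ (-(1:ℝ)/2) * (-4 / Real.log x + 2 / (Real.log x) ^ 2)) :=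
    integral_Ioi_of_hasDerivAt_of_tendsto' (fun t htt => hD2 (lt_of_lt_of_le hx1 htt)) hg2i hT2
  have hIci : ∫ t in Ici x, f t = ∫ t in Ioi x, f t := integral_Ici_eq_integral_Ioi
  have hmono1 : ∫ t in Ioi x, (-23/30 : ℝ) * (t ^ (-(3:ℝ)/2)
      * (2 / Real.log t + 4 / (Real.log t) ^ 2)) ≤ ∫ t in Ioi x, f t :=
    setIntegral_mono_on (hg1i.const_mul _) hfi measurableSet_Ioi (fun t ht => (hpt t ht).1)
  have hmono2 : ∫ t in Ioi x, f t ≤ ∫ t in Ioi x, (-17/30 : ℝ) * (t ^ (-(3:ℝ)/2)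
      * (2 / Real.log t + 3 / (Real.log t) ^ 2 - 4 / (Real.log t) ^ 3)) :=
    setIntegral_mono_on hfi (hg2i.const_mul _) measurableSet_Ioi (fun t ht => (hpt t ht).2)
  rw [integral_const_mul, hi1] at hmono1
  rw [integral_const_mul, hi2] at hmono2
  have hs : (0:ℝ) ≤ Real.sqrt x := Real.sqrt_nonneg x
  have hxx : x ^ (-(1:ℝ)/2) * Real.sqrt x = 1 := by
    rw [Real.sqrt_eq_rpow, ← Real.rpow_add hx0]; norm_num
  constructor
  · have hAl := mul_le_mul_of_nonneg_right
      (mul_le_mul_of_nonneg_right (hIci ▸ hmono1) hs) hLx0.le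
    have hev : ((-23/30 : ℝ) * (0 - (-4 * x ^ (-(1:ℝ)/2) / Real.log x)))
        * Real.sqrt x * Real.log x = -92/30 * (x ^ (-(1:ℝ)/2) * Real.sqrt x) := by
      field_simp; ring
    rw [hev, hxx, mul_one] at hAl
    exact hAl
  · have hAu := mul_le_mul_of_nonneg_right
      (mul_le_mul_of_nonneg_right (hIci ▸ hmono2) hs) hLx0.le
    have hev : ((-17/30 : ℝ) * (0 - (x ^ (-(1:ℝ)/2)
        * (-4 / Real.log x + 2 / (Real.log x) ^ 2))))
        * Real.sqrt x * Real.log x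
        = (-68/30 + 17/15 / Real.log x) * (x ^ (-(1:ℝ)/2) * Real.sqrt x) := by
      field_simp; ring
    rw [hev, hxx, mul_one] at hAu
    exact hAu


/-- If −(2/3 + 0.1)t^(3/2) ≤ Φ(t) ≤ (−2/3 + 0.1)t^(3/2) for t > X₀, and
E(x) = ∫_x^∞ Φ(t)/(t³ log t)·(2 + 3/log t + 2/(log t)²) dt, then
−92/30 ≤ liminf E(x)√x log x and limsup E(x)√x log x ≤ −68/30. -/
theorem stmt_9 (Φ : ℝ → ℝ) (hmeas : Measurable Φ) (X₀ : ℝ)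
    (hlb : ∀ t : ℝ, X₀ < t → -(2 / 3 + 0.1) * t ^ ((3 : ℝ) / 2) ≤ Φ t)
    (hub : ∀ t : ℝ, X₀ < t → Φ t ≤ (-2 / 3 + 0.1) * t ^ ((3 : ℝ) / 2)) :
    (-92 / 30 : ℝ) ≤ Filter.liminf (fun x : ℝ =>
        (∫ t in Set.Ici x, Φ t / (t ^ 3 * Real.log t)
            * (2 + 3 / Real.log t + 2 / (Real.log t) ^ 2))
          * Real.sqrt x * Real.log x) atTop ∧
    Filter.limsup (fun x : ℝ =>
        (∫ t in Set.Ici x, Φ t / (t ^ 3 * Real.log t)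
            * (2 + 3 / Real.log t + 2 / (Real.log t) ^ 2))
          * Real.sqrt x * Real.log x) atTop ≤ -68 / 30 := by

  set A : ℝ → ℝ := fun x =>
    (∫ t in Set.Ici x, Φ t / (t ^ 3 * Real.log t)
        * (2 + 3 / Real.log t + 2 / (Real.log t) ^ 2))
      * Real.sqrt x * Real.log x with hAdef
  have ev : ∀ᶠ x in atTop, (-92/30 ≤ A x ∧ A x ≤ -68/30 + 17/15 / Real.log x) := by
    filter_upwards [eventually_ge_atTop (max X₀ (Real.exp 2))] with x hx
    exact key Φ hmeas X₀ hlb hub (le_trans (le_max_left _ _) hx)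
      (le_trans (le_max_right _ _) hx)
  have hB : Tendsto (fun x : ℝ => -68/30 + 17/15 / Real.log x) atTop (nhds (-68/30 : ℝ)) := by
    have h2 : Tendsto (fun s : ℝ => (Real.log s)⁻¹) atTop (nhds 0) :=
      Real.tendsto_log_atTop.inv_tendsto_atTop
    have := tendsto_const_nhds (α := ℝ) (x := (-68/30 : ℝ)) (f := atTop).add
      (h2.const_mul (17/15 : ℝ))
    simpa [div_eq_mul_inv] using this
  have evlb : ∀ᶠ x in atTop, (-92/30 : ℝ) ≤ A x := ev.mono fun x h => h.1
  have evub : ∀ᶠ x in atTop, A x ≤ -68/30 + 17/15 / Real.log x := ev.mono fun x h => h.2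
  have evub0 : ∀ᶠ x in atTop, A x ≤ (0:ℝ) := by
    filter_upwards [evub, eventually_ge_atTop (Real.exp 2)] with x hx hxe
    have hx0 : 0 < x := lt_of_lt_of_le (Real.exp_pos 2) hxe
    have hLx : 2 ≤ Real.log x := (Real.le_log_iff_exp_le hx0).2 hxe
    have : 17/15 / Real.log x ≤ 17/30 := by
      rw [div_le_iff₀ (by linarith)]; linarith
    linarith
  constructor
  · refine le_liminf_of_le ?_ evlb
    exact isCoboundedUnder_ge_of_eventually_le atTop evub0
  · have h := limsup_le_limsup evub
      (isCoboundedUnder_le_of_eventually_le atTop evlb) hB.isBoundedUnder_le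
    calc Filter.limsup A atTop ≤ _ := h
      _ = -68/30 := hB.limsup_eq
      _ ≤ -68/30 := le_refl _
end

section
/- Let p_j denote the j-th prime and θ_j = θ(p_j) = ∑_{i≤j} log p_i. Suppose |θ(x) − x| ≤ (1/(8π))·√x·(log x)² for all x > X₀. Then the series V_k = ∑_{j>k} |1/p_j − 1/θ_j| converges for every k, and V_k ≤ (1/(8π))·(1+δ_k)·∑_{j>k} (log p_j)²/(p_j^{3/2}) with δ_k → 0. -/
open Filter Real

noncomputable def pjR (j : ℕ) : ℝ := (Nat.nth Nat.Prime j : ℝ)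

lemma nth_prime_ge (j : ℕ) : j + 1 ≤ Nat.nth Nat.Prime j := by
  induction j with
  | zero => simpa using (Nat.prime_nth_prime 0).two_le
  | succ n ih =>
    have h2 : Nat.nth Nat.Prime n < Nat.nth Nat.Prime (n+1) :=
      (Nat.nth_lt_nth (p := Nat.Prime) Nat.infinite_setOf_prime).2 (Nat.lt_succ_self n)
    omega

lemma pjR_ge (j : ℕ) : (j : ℝ) + 1 ≤ pjR j := by
  have := nth_prime_ge j
  unfold pjR; exact_mod_cast this

lemma pjR_two_le (j : ℕ) : 2 ≤ pjR j := by
  have := (Nat.prime_nth_prime j).two_le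
  unfold pjR; exact_mod_cast this

lemma pjR_pos (j : ℕ) : 0 < pjR j := lt_of_lt_of_le two_pos (pjR_two_le j)

lemma log_pjR_pos (j : ℕ) : 0 < Real.log (pjR j) :=
  Real.log_pos (lt_of_lt_of_le one_lt_two (pjR_two_le j))

lemma chebTheta_nat_ge (n : ℕ) (hn : 2 ≤ n) : Real.log 2 ≤ chebTheta n := by
  unfold chebTheta
  rw [Nat.floor_natCast]
  have h2 : (2 : ℕ) ∈ (Finset.range (n + 1)).filter Nat.Prime := by
    simp [Finset.mem_filter, Finset.mem_range, Nat.prime_two]; omega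
  have := Finset.single_le_sum (f := fun p : ℕ => Real.log p)
    (fun p hp => by
      have := ((Finset.mem_filter.1 hp).2).one_le
      exact Real.log_nonneg (by exact_mod_cast this)) h2
  simpa using this

lemma chebTheta_pj_pos (j : ℕ) : 0 < chebTheta (pjR j) := by
  have := chebTheta_nat_ge (Nat.nth Nat.Prime j) (Nat.prime_nth_prime j).two_le
  have h2 : (0:ℝ) < Real.log 2 := Real.log_pos one_lt_two
  unfold pjR; linarith

lemma log_sq_le (x : ℝ) (hx : 1 ≤ x) : (Real.log x) ^ 2 ≤ 64 * x ^ ((1:ℝ)/4) := by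
  have h0 : 0 ≤ x := by linarith
  have h1 : Real.log x ≤ 8 * x ^ ((1:ℝ)/8) := by
    have := Real.log_le_rpow_div h0 (show (0:ℝ) < 1/8 by norm_num)
    linarith [this]
  have h2 : 0 ≤ Real.log x := Real.log_nonneg hx
  have h3 : (Real.log x)^2 ≤ (8 * x ^ ((1:ℝ)/8))^2 := by
    apply pow_le_pow_left₀ h2 h1
  calc (Real.log x)^2 ≤ (8 * x ^ ((1:ℝ)/8))^2 := h3
    _ = 64 * (x ^ ((1:ℝ)/8)) ^ (2:ℕ) := by ring
    _ = 64 * x ^ ((1:ℝ)/4) := by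
        rw [← Real.rpow_natCast (x ^ ((1:ℝ)/8)) 2, ← Real.rpow_mul h0]
        norm_num

noncomputable def gjR (j : ℕ) : ℝ := (Real.log (pjR j)) ^ 2 / (pjR j) ^ ((3:ℝ)/2)

lemma gjR_pos (j : ℕ) : 0 < gjR j :=
  div_pos (pow_pos (log_pjR_pos j) 2) (Real.rpow_pos_of_pos (pjR_pos j) _)

lemma gjR_le (j : ℕ) : gjR j ≤ 64 * ((j:ℝ) + 1) ^ (-(5/4 : ℝ)) := by
  have hp : 0 < pjR j := pjR_pos j
  have h1 : gjR j ≤ 64 * (pjR j) ^ (-(5/4 : ℝ)) := by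
    unfold gjR
    have hl : (Real.log (pjR j))^2 ≤ 64 * (pjR j) ^ ((1:ℝ)/4) :=
      log_sq_le _ (by linarith [pjR_two_le j])
    calc (Real.log (pjR j))^2 / (pjR j) ^ ((3:ℝ)/2)
        ≤ (64 * (pjR j) ^ ((1:ℝ)/4)) / (pjR j) ^ ((3:ℝ)/2) := by
          gcongr
      _ = 64 * (pjR j) ^ (-(5/4:ℝ)) := by
          rw [mul_div_assoc, ← Real.rpow_sub hp]; norm_num
  refine h1.trans ?_
  have hj : (0:ℝ) < (j:ℝ) + 1 := by positivity
  have h2 : (pjR j) ^ (-(5/4:ℝ)) ≤ ((j:ℝ) + 1) ^ (-(5/4:ℝ)) := by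
    rw [Real.rpow_neg hp.le, Real.rpow_neg hj.le]
    apply inv_anti₀ (Real.rpow_pos_of_pos hj _)
    exact Real.rpow_le_rpow hj.le (pjR_ge j) (by norm_num)
  linarith

lemma gjR_summable : Summable gjR := by
  apply Summable.of_nonneg_of_le (fun j => (gjR_pos j).le) gjR_le
  apply Summable.mul_left
  have h : Summable (fun n : ℕ => ((n:ℝ)) ^ (-(5/4:ℝ))) := Real.summable_nat_rpow.2 (by norm_num)
  have := (summable_nat_add_iff 1).2 h
  refine this.congr fun n => ?_
  push_cast
  ring_nf

lemma key_bound (X₀ : ℝ)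
    (h : ∀ x : ℝ, X₀ < x →
      |chebTheta x - x| ≤ (1 / (8 * Real.pi)) * Real.sqrt x * (Real.log x) ^ 2)
    {ε : ℝ} (hε : 0 < ε) :
    ∃ N : ℕ, ∀ j, N ≤ j →
      |1 / pjR j - 1 / chebTheta (pjR j)| ≤ (1 / (8 * Real.pi)) * (1 + ε) * gjR j := by
  set c : ℝ := 1 / (8 * Real.pi) with hc_def
  have hc : 0 < c := by positivity
  set B : ℝ := 64 * c * (1 + ε) / ε with hB_def
  have hB : 0 < B := by positivity
  refine ⟨⌈max X₀ (B ^ 4)⌉₊ + 1, fun j hj => ?_⟩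
  set p : ℝ := pjR j with hp_def
  have hp : 0 < p := pjR_pos j
  have hp2 : 2 ≤ p := pjR_two_le j
  have hpbig : max X₀ (B ^ 4) + 1 ≤ p := by
    have h1 : (⌈max X₀ (B ^ 4)⌉₊ : ℝ) + 1 + 1 ≤ (j : ℝ) + 1 := by
      have : (⌈max X₀ (B ^ 4)⌉₊ + 1 : ℕ) ≤ j := hj
      exact_mod_cast by push_cast; linarith [(show ((⌈max X₀ (B^4)⌉₊:ℕ):ℝ) + 1 ≤ (j:ℝ) by exact_mod_cast this)]
    have h2 := Nat.le_ceil (max X₀ (B ^ 4))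
    have h3 := pjR_ge j
    linarith
  have hX : X₀ < p := by
    have := le_max_left X₀ (B ^ 4); linarith
  have hB4 : B ^ 4 ≤ p := by
    have := le_max_right X₀ (B ^ 4); linarith
  set θ : ℝ := chebTheta p with hθ_def
  have hθ : 0 < θ := chebTheta_pj_pos j
  set L : ℝ := Real.log p with hL_def
  have hL : 0 < L := log_pjR_pos j
  have he : |θ - p| ≤ c * Real.sqrt p * L ^ 2 := h p hX
  -- B ≤ p^(1/4)
  have h14 : B ≤ p ^ ((1:ℝ)/4) := by
    have hB4r : (B ^ 4) ^ ((1:ℝ)/4) = B := by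
      rw [← Real.rpow_natCast B 4, ← Real.rpow_mul hB.le]; norm_num
    calc B = (B ^ 4) ^ ((1:ℝ)/4) := hB4r.symm
      _ ≤ p ^ ((1:ℝ)/4) := Real.rpow_le_rpow (by positivity) hB4 (by norm_num)
  have hLsq : L ^ 2 ≤ 64 * p ^ ((1:ℝ)/4) := log_sq_le p (by linarith)
  have hq : ε / (1 + ε) * B = 64 * c := by
    rw [hB_def]; field_simp
  have hsqrt : Real.sqrt p = p ^ ((1:ℝ)/4) * p ^ ((1:ℝ)/4) := by
    rw [Real.sqrt_eq_rpow, ← Real.rpow_add hp]; norm_num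
  have hq4 : (0:ℝ) < p ^ ((1:ℝ)/4) := Real.rpow_pos_of_pos hp _
  have hcL : c * L ^ 2 ≤ ε / (1 + ε) * Real.sqrt p := by
    have h1 : c * L ^ 2 ≤ 64 * c * p ^ ((1:ℝ)/4) := by nlinarith
    have h2 : 64 * c * p ^ ((1:ℝ)/4) ≤ ε / (1 + ε) * Real.sqrt p := by
      rw [hsqrt, ← hq]
      have hpe : 0 < ε / (1 + ε) := by positivity
      nlinarith [mul_le_mul_of_nonneg_right h14 hq4.le,
        mul_le_mul_of_nonneg_left (mul_le_mul_of_nonneg_right h14 hq4.le) hpe.le]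
    linarith
  have hsq : Real.sqrt p * Real.sqrt p = p := Real.mul_self_sqrt hp.le
  have hsp : 0 < Real.sqrt p := Real.sqrt_pos.2 hp
  have hθlb : p / (1 + ε) ≤ θ := by
    have h1 : p - θ ≤ c * Real.sqrt p * L ^ 2 := by
      have := abs_le.1 he; linarith [this.1]
    have h2 : c * Real.sqrt p * L ^ 2 ≤ ε / (1 + ε) * p := by
      calc c * Real.sqrt p * L ^ 2 = Real.sqrt p * (c * L ^ 2) := by ring
        _ ≤ Real.sqrt p * (ε / (1 + ε) * Real.sqrt p) := by
            apply mul_le_mul_of_nonneg_left hcL hsp.le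
        _ = ε / (1 + ε) * p := by linear_combination ε / (1 + ε) * hsq
    have h3 : p - ε / (1 + ε) * p = p / (1 + ε) := by field_simp; ring
    linarith
  have hθlb' : 0 < p / (1 + ε) := by positivity
  have heq : |1 / p - 1 / θ| = |θ - p| / (p * θ) := by
    rw [div_sub_div _ _ (ne_of_gt hp) (ne_of_gt hθ), abs_div,
      abs_of_pos (mul_pos hp hθ)]
    ring_nf
  have hps : p ^ ((3:ℝ)/2) = p * Real.sqrt p := by
    rw [show (3:ℝ)/2 = 1 + 1/2 by norm_num, Real.rpow_add hp, Real.rpow_one,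
      ← Real.sqrt_eq_rpow]
  have key : |1 / p - 1 / θ| ≤ c * (1 + ε) * (L ^ 2 / p ^ ((3:ℝ)/2)) := by
    rw [heq]
    calc |θ - p| / (p * θ) ≤ (c * Real.sqrt p * L ^ 2) / (p * θ) := by gcongr
      _ ≤ (c * Real.sqrt p * L ^ 2) / (p * (p / (1 + ε))) := by
          gcongr
          all_goals first | positivity | exact mul_pos hp hθlb' | exact hθlb
      _ = c * (1 + ε) * (L ^ 2 / p ^ ((3:ℝ)/2)) := by
          rw [hps]
          field_simp
          linear_combination hsq
  exact key


set_option maxHeartbeats 1000000 in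
/-- Let p_j be the j-th prime and θ_j = θ(p_j). If |θ(x) − x| ≤ (1/(8π))√x(log x)²
for x > X₀, then V_k = ∑_{j>k}|1/p_j − 1/θ_j| converges and
V_k ≤ (1/(8π))(1+δ_k)·∑_{j>k}(log p_j)²/p_j^(3/2) with δ_k → 0. -/
theorem stmt_11 (X₀ : ℝ)
    (h : ∀ x : ℝ, X₀ < x →
      |chebTheta x - x| ≤ (1 / (8 * Real.pi)) * Real.sqrt x * (Real.log x) ^ 2) :
    (Summable fun j : ℕ =>
        |1 / ((Nat.nth Nat.Prime j : ℝ))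
          - 1 / chebTheta (Nat.nth Nat.Prime j)|) ∧
    ∃ δ : ℕ → ℝ, Tendsto δ atTop (nhds 0) ∧
      ∀ k : ℕ,
        (∑' j : ℕ, |1 / ((Nat.nth Nat.Prime (k + 1 + j) : ℝ))
            - 1 / chebTheta (Nat.nth Nat.Prime (k + 1 + j))|)
          ≤ (1 / (8 * Real.pi)) * (1 + δ k)
            * ∑' j : ℕ, (Real.log (Nat.nth Nat.Prime (k + 1 + j))) ^ 2
                / ((Nat.nth Nat.Prime (k + 1 + j) : ℝ)) ^ ((3 : ℝ) / 2) := by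
  have hc : (0:ℝ) < 1 / (8 * Real.pi) := by positivity
  set c : ℝ := 1 / (8 * Real.pi) with hc_def
  set F : ℕ → ℝ := fun j => |1 / pjR j - 1 / chebTheta (pjR j)| with hF_def
  -- summability of F
  obtain ⟨N₁, hN₁⟩ := key_bound X₀ h one_pos
  have hsumF : Summable F := by
    rw [← summable_nat_add_iff N₁]
    apply Summable.of_nonneg_of_le (fun j => abs_nonneg _)
      (fun j => hN₁ (j + N₁) (Nat.le_add_left _ _))
    exact (summable_nat_add_iff N₁).2 (gjR_summable.mul_left (c * (1 + 1)))
  have hsumF_shift : ∀ k : ℕ, Summable (fun j => F (k + 1 + j)) := fun k =>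
    ((summable_nat_add_iff (k + 1)).2 hsumF).congr fun j => by rw [Nat.add_comm]
  have hsumG_shift : ∀ k : ℕ, Summable (fun j => gjR (k + 1 + j)) := fun k =>
    ((summable_nat_add_iff (k + 1)).2 gjR_summable).congr fun j => by rw [Nat.add_comm]
  set V : ℕ → ℝ := fun k => ∑' j, F (k + 1 + j) with hV_def
  set S : ℕ → ℝ := fun k => ∑' j, gjR (k + 1 + j) with hS_def
  have hSpos : ∀ k, 0 < S k := fun k =>
    Summable.tsum_pos (hsumG_shift k) (fun i => (gjR_pos _).le) 0 (gjR_pos _)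
  set δ : ℕ → ℝ := fun k => max 0 (V k / (c * S k) - 1) with hδ_def
  have hδ0 : ∀ k, 0 ≤ δ k := fun k => le_max_left _ _
  -- the uniform tail bound with parameter ε
  have htail : ∀ ε : ℝ, 0 < ε → ∃ N : ℕ, ∀ k, N ≤ k → V k ≤ c * (1 + ε) * S k := by
    intro ε hε
    obtain ⟨N, hN⟩ := key_bound X₀ h hε
    refine ⟨N, fun k hk => ?_⟩
    have h1 : V k ≤ ∑' j, c * (1 + ε) * gjR (k + 1 + j) := by
      apply Summable.tsum_le_tsum _ (hsumF_shift k) ((hsumG_shift k).mul_left _)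
      intro j
      exact hN (k + 1 + j) (by omega)
    rwa [tsum_mul_left] at h1
  constructor
  · exact hsumF
  refine ⟨δ, ?_, ?_⟩
  · -- tendsto
    rw [Metric.tendsto_atTop]
    intro ε hε
    obtain ⟨N, hN⟩ := htail (ε / 2) (half_pos hε)
    refine ⟨N, fun k hk => ?_⟩
    have h1 : V k ≤ c * (1 + ε / 2) * S k := hN k hk
    have h2 : 0 < c * S k := mul_pos hc (hSpos k)
    have h3 : V k / (c * S k) - 1 ≤ ε / 2 := by
      rw [sub_le_iff_le_add, div_le_iff₀ h2]
      nlinarith [hSpos k]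
    have h4 : δ k ≤ ε / 2 := max_le (by linarith) h3
    have h5 : |δ k| = δ k := abs_of_nonneg (hδ0 k)
    rw [Real.dist_eq, sub_zero, h5]
    linarith
  · -- the inequality
    intro k
    have h1 : V k / (c * S k) - 1 ≤ δ k := le_max_right _ _
    have h2 : 0 < c * S k := mul_pos hc (hSpos k)
    have h3 : V k ≤ (1 + δ k) * (c * S k) := by
      rw [← div_le_iff₀ h2]; linarith
    calc V k ≤ (1 + δ k) * (c * S k) := h3
      _ = c * (1 + δ k) * S k := by ring
end
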